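/- Let r ≥ 2 and l ≥ 3 be integers and let H be a simple hypergraph all of whose edges have size between 2 and r, with average degree d. Then there exists a pair (X,Y) of disjoint subsets of V(H) with |X| ≥ d/r and |Y| ≤ (r−1)|X| such that for all distinct u,v ∈ X and every S ⊆ V(H)∖({u,v} ∪ Y) with |S| ≤ 2l−5, there is a simple path of length two in H joining u to v and containing no vertex of S. -/
import Mathlib


open Finset

section Defs

variable {α : Type*} [DecidableEq α]

/-- `e 0, …, e (l-1)` form a loose cycle of length `l`: distinct edges, each of size
at least 2, cyclically consecutive edges meet in exactly one vertex, all other pairs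
of edges are disjoint. -/
def IsLooseCycleOn (l : ℕ) (e : ℕ → Finset α) : Prop :=
  (∀ i < l, ∀ j < l, i ≠ j → e i ≠ e j) ∧
  (∀ i < l, 2 ≤ (e i).card) ∧
  (∀ i < l, (e i ∩ e ((i + 1) % l)).card = 1) ∧
  (∀ i < l, ∀ j < l, j ≠ i → j ≠ (i + 1) % l → i ≠ (j + 1) % l → e i ∩ e j = ∅)

/-- A hypergraph with edge set `E` contains a loose cycle of length `l`. -/
def ContainsLooseCycle (l : ℕ) (E : Set (Finset α)) : Prop :=
  ∃ e : ℕ → Finset α, IsLooseCycleOn l e ∧ ∀ i < l, e i ∈ E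

/-- A hypergraph with edge set `E` contains an `r`-uniform loose cycle of length `l`. -/
def ContainsUniformLooseCycle (r l : ℕ) (E : Set (Finset α)) : Prop :=
  ∃ e : ℕ → Finset α, IsLooseCycleOn l e ∧ (∀ i < l, (e i).card = r) ∧ ∀ i < l, e i ∈ E

/-- `f 0, …, f (k-1)` form a simple path of length `k`: each edge has size at least 2,
consecutive edges meet, non-consecutive edges are disjoint, and any two distinct
edges meet in at most one vertex. -/
def IsSimplePathOn (k : ℕ) (f : ℕ → Finset α) : Prop :=
  (∀ i < k, 2 ≤ (f i).card) ∧
  (∀ i, i + 1 < k → (f i ∩ f (i + 1)).Nonempty) ∧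
  (∀ i < k, ∀ j < k, i < j → j ≠ i + 1 → f i ∩ f j = ∅) ∧
  (∀ i < k, ∀ j < k, i ≠ j → (f i ∩ f j).card ≤ 1)

/-- The simple path `f 0, …, f (k-1)` joins `a` to `b`. -/
def SimplePathJoins (k : ℕ) (f : ℕ → Finset α) (a b : α) : Prop :=
  IsSimplePathOn k f ∧ a ∈ f 0 ∧ b ∈ f (k - 1) ∧
  (2 ≤ k → a ∉ f 1 ∧ b ∉ f (k - 2))

/-- `p` is a heavy pair of the 3-graph `H` (with respect to the parameter `l`):
it is a pair of vertices contained in at least `2l-2` edges of `H`. -/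
def PairHeavy (l : ℕ) (H : Finset (Finset α)) (p : Finset α) : Prop :=
  p.card = 2 ∧ 2 * l - 2 ≤ (H.filter fun e => p ⊆ e).card

/-- `e` is a light edge of the 3-graph `H`: an edge of `H` containing no heavy pair. -/
def EdgeLight (l : ℕ) (H : Finset (Finset α)) (e : Finset α) : Prop :=
  e ∈ H ∧ ∀ p ⊆ e, ¬ PairHeavy l H p

/-- The reduced hypergraph `H*` of a 3-graph `H`: its edges are the light edges of `H`
together with the heavy pairs of `H`. -/
def Reduced (l : ℕ) (H : Finset (Finset α)) : Set (Finset α) :=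
  {e | EdgeLight l H e ∨ PairHeavy l H e}

/-- `(X, Y)` is an extender in the 3-graph `H`. -/
def IsExtender (l : ℕ) (H : Finset (Finset α)) (X Y : Finset α) : Prop :=
  Disjoint X Y ∧ Y.card ≤ 2 * X.card ∧
  ∀ u ∈ X, ∀ v ∈ X, u ≠ v → ∀ S : Finset α,
    Disjoint S ({u, v} ∪ Y) → S.card ≤ 2 * l - 5 →
      ∃ f : ℕ → Finset α, SimplePathJoins 2 f u v ∧ (∀ i < 2, f i ∈ H) ∧
        ∀ i < 2, Disjoint (f i) S

/-- `X` is an independent set of the hypergraph with edge set `E`. -/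
def IndepIn (E : Set (Finset α)) (X : Finset α) : Prop := ∀ e ∈ E, ¬ e ⊆ X

end Defs

/-- In a simple `[2,r]`-graph of average degree `d` there is an extender `(X, Y)`
(in the `[2,r]`-graph sense: `|Y| ≤ (r-1)|X|`) with `|X| ≥ d / r`. -/
theorem simple_graph_extender {α : Type*} [DecidableEq α] [Fintype α] (r l : ℕ)
    (hr : 2 ≤ r) (hl : 3 ≤ l)
    (H : Finset (Finset α)) (hH : ∀ e ∈ H, 2 ≤ e.card ∧ e.card ≤ r)
    (hsimple : ∀ e ∈ H, ∀ f ∈ H, e ≠ f → (e ∩ f).card ≤ 1) :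
    ∃ X Y : Finset α, Disjoint X Y ∧
      ((∑ e ∈ H, (e.card : ℝ)) / (Fintype.card α : ℝ)) / (r : ℝ) ≤ (X.card : ℝ) ∧
      Y.card ≤ (r - 1) * X.card ∧
      ∀ u ∈ X, ∀ v ∈ X, u ≠ v → ∀ S : Finset α,
        Disjoint S ({u, v} ∪ Y) → S.card ≤ 2 * l - 5 →
          ∃ f : ℕ → Finset α, SimplePathJoins 2 f u v ∧ (∀ i < 2, f i ∈ H) ∧
            ∀ i < 2, Disjoint (f i) S := by
  classical
  by_cases hHe : H = ∅
  · refine ⟨∅, ∅, disjoint_empty_left _, ?_, by simp, by simp⟩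
    simp [hHe]
  have hHne : H.Nonempty := Finset.nonempty_iff_ne_empty.2 hHe
  obtain ⟨e0, he0⟩ := hHne
  have hα : Nonempty α := by
    obtain ⟨a, ha⟩ := Finset.card_pos.1 (lt_of_lt_of_le (by norm_num) (hH e0 he0).1)
    exact ⟨a⟩
  set deg : α → ℕ := fun v => (H.filter fun e => v ∈ e).card with hdeg
  obtain ⟨w, -, hwmax⟩ := Finset.exists_max_image (Finset.univ : Finset α) deg
    ⟨Classical.arbitrary α, Finset.mem_univ _⟩
  -- double counting
  have hdouble : ∑ e ∈ H, e.card = ∑ v : α, deg v := by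
    simp only [hdeg, Finset.card_filter]
    rw [Finset.sum_comm]
    refine Finset.sum_congr rfl fun e he => ?_
    simp
  set Hw : Finset (Finset α) := H.filter (fun e => w ∈ e) with hHw
  have hHwH : ∀ e ∈ Hw, e ∈ H := fun e he => (Finset.mem_filter.1 he).1
  have hHww : ∀ e ∈ Hw, w ∈ e := fun e he => (Finset.mem_filter.1 he).2
  set x : Finset α → α := fun e => if h : (e.erase w).Nonempty then h.choose else w with hxdef
  have hx : ∀ e ∈ Hw, x e ∈ e ∧ x e ≠ w := by
    intro e he
    have h2 : 2 ≤ e.card := (hH e (hHwH e he)).1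
    have hne : (e.erase w).Nonempty := by
      rw [← Finset.card_pos, Finset.card_erase_of_mem (hHww e he)]; omega
    have hmem : x e ∈ e.erase w := by
      simp only [hxdef, dif_pos hne]; exact hne.choose_spec
    exact ⟨Finset.mem_of_mem_erase hmem, Finset.ne_of_mem_erase hmem⟩
  have hkey : ∀ e ∈ Hw, ∀ g ∈ Hw, x g ∈ e → g = e := by
    intro e he g hg hxg
    by_contra hne
    have hcard := hsimple g (hHwH g hg) e (hHwH e he) hne
    have h1 : x g ∈ g ∩ e := Finset.mem_inter.2 ⟨(hx g hg).1, hxg⟩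
    have h2 : w ∈ g ∩ e := Finset.mem_inter.2 ⟨hHww g hg, hHww e he⟩
    exact (hx g hg).2 (Finset.card_le_one.1 hcard _ h1 _ h2)
  have hinj : Set.InjOn x Hw := by
    intro e he f hf hef
    exact (hkey e he f hf (by rw [← hef]; exact (hx e he).1)).symm
  set X : Finset α := Hw.image x with hX
  have hXcard : X.card = Hw.card := Finset.card_image_of_injOn hinj
  set Y : Finset α := (Hw.biUnion id) \ X with hY
  have hdisj : Disjoint X Y := disjoint_sdiff_self_right
  -- every edge through w is inside {x e} ∪ Y
  have hsub : ∀ e ∈ Hw, e ⊆ insert (x e) Y := by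
    intro e he y hy
    rcases eq_or_ne y (x e) with h | h
    · exact h ▸ Finset.mem_insert_self _ _
    · refine Finset.mem_insert_of_mem ?_
      rw [hY, Finset.mem_sdiff]
      refine ⟨Finset.mem_biUnion.2 ⟨e, he, hy⟩, ?_⟩
      intro hyX
      obtain ⟨g, hg, hgy⟩ := Finset.mem_image.1 hyX
      exact h (by rw [← hgy, hkey e he g hg (hgy ▸ hy)])
  refine ⟨X, Y, hdisj, ?_, ?_, ?_⟩
  · -- size bound
    have hdw : X.card = deg w := by rw [hXcard]
    have hsumle : ∑ v : α, deg v ≤ Fintype.card α * deg w := by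
      calc ∑ v : α, deg v ≤ ∑ _v : α, deg w :=
            Finset.sum_le_sum fun v _ => hwmax v (Finset.mem_univ v)
        _ = Fintype.card α * deg w := by simp [mul_comm]
    have hn : (0:ℝ) < (Fintype.card α : ℝ) := by
      exact_mod_cast Fintype.card_pos
    have hsum : (∑ e ∈ H, (e.card : ℝ)) ≤ (Fintype.card α : ℝ) * (deg w : ℝ) := by
      have : ((∑ e ∈ H, e.card : ℕ) : ℝ) ≤ ((Fintype.card α * deg w : ℕ) : ℝ) := by
        exact_mod_cast (hdouble ▸ hsumle)
      push_cast at this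
      simpa using this
    have hd1 : (∑ e ∈ H, (e.card : ℝ)) / (Fintype.card α : ℝ) ≤ (deg w : ℝ) := by
      rw [div_le_iff₀ hn]
      linarith [hsum]
    have hd0 : (0:ℝ) ≤ (∑ e ∈ H, (e.card : ℝ)) / (Fintype.card α : ℝ) := by
      apply div_nonneg _ hn.le
      exact Finset.sum_nonneg fun e _ => by positivity
    have hr1 : (1:ℝ) ≤ (r:ℝ) := by exact_mod_cast (by omega : 1 ≤ r)
    calc (∑ e ∈ H, (e.card : ℝ)) / (Fintype.card α : ℝ) / (r:ℝ)
        ≤ (∑ e ∈ H, (e.card : ℝ)) / (Fintype.card α : ℝ) := div_le_self hd0 hr1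
      _ ≤ (deg w : ℝ) := hd1
      _ = (X.card : ℝ) := by rw [hdw]
  · -- |Y| ≤ (r-1)|X|
    have hsubY : Y ⊆ Hw.biUnion (fun e => e.erase (x e)) := by
      intro y hy
      rw [hY, Finset.mem_sdiff] at hy
      obtain ⟨hy1, hy2⟩ := hy
      obtain ⟨e, he, hye⟩ := Finset.mem_biUnion.1 hy1
      refine Finset.mem_biUnion.2 ⟨e, he, Finset.mem_erase.2 ⟨?_, hye⟩⟩
      intro hyx
      exact hy2 (hyx ▸ Finset.mem_image.2 ⟨e, he, rfl⟩)
    calc Y.card ≤ (Hw.biUnion (fun e => e.erase (x e))).card := Finset.card_le_card hsubY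
      _ ≤ ∑ e ∈ Hw, (e.erase (x e)).card := Finset.card_biUnion_le
      _ ≤ ∑ _e ∈ Hw, (r - 1) := by
          refine Finset.sum_le_sum fun e he => ?_
          rw [Finset.card_erase_of_mem (hx e he).1]
          have := (hH e (hHwH e he)).2
          omega
      _ = (r - 1) * X.card := by rw [Finset.sum_const, hXcard, smul_eq_mul, mul_comm]
  · -- path condition
    intro u hu v hv huv S hS hScard
    obtain ⟨eu, heu, hequ⟩ := Finset.mem_image.1 hu
    obtain ⟨ev, hev, heqv⟩ := Finset.mem_image.1 hv
    have heuv : eu ≠ ev := by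
      intro h; exact huv (hequ ▸ heqv ▸ h ▸ rfl)
    have hueu : u ∈ eu := hequ ▸ (hx eu heu).1
    have hvev : v ∈ ev := heqv ▸ (hx ev hev).1
    have hunotv : u ∉ ev := by
      intro h
      exact heuv (hkey ev hev eu heu (hequ ▸ h))
    have hvnotu : v ∉ eu := by
      intro h
      exact heuv.symm (hkey eu heu ev hev (heqv ▸ h))
    have hSdisj : ∀ e ∈ Hw, x e = u ∨ x e = v → Disjoint e S := by
      intro e he hxe
      refine Finset.disjoint_left.2 fun a hae haS => ?_
      have : a ∈ insert (x e) Y := hsub e he hae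
      rcases Finset.mem_insert.1 this with h | h
      · have : a ∈ ({u, v} : Finset α) ∪ Y := by
          rcases hxe with h' | h'
          · exact Finset.mem_union_left _ (by simp [h, h'])
          · exact Finset.mem_union_left _ (by simp [h, h'])
        exact Finset.disjoint_left.1 hS haS this
      · exact Finset.disjoint_left.1 hS haS (Finset.mem_union_right _ h)
    have hdeu : Disjoint eu S := hSdisj eu heu (Or.inl hequ)
    have hdev : Disjoint ev S := hSdisj ev hev (Or.inr heqv)
    refine ⟨fun n => if n = 0 then eu else ev, ?_, ?_, ?_⟩
    · refine ⟨⟨?_, ?_, ?_, ?_⟩, by simpa using hueu, by simpa using hvev, ?_⟩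
      · intro i hi
        interval_cases i
        · simpa using (hH eu (hHwH eu heu)).1
        · simpa using (hH ev (hHwH ev hev)).1
      · intro i hi
        have : i = 0 := by omega
        subst this
        exact ⟨w, by simp [Finset.mem_inter, hHww eu heu, hHww ev hev]⟩
      · intro i hi j hj hij hne
        omega
      · intro i hi j hj hij
        interval_cases i <;> interval_cases j
        · exact absurd rfl hij
        · simpa using hsimple eu (hHwH eu heu) ev (hHwH ev hev) heuv
        · simpa [Finset.inter_comm] using hsimple eu (hHwH eu heu) ev (hHwH ev hev) heuv
        · exact absurd rfl hij
      · intro _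
        constructor
        · simpa using hunotv
        · simpa using hvnotu
    · intro i hi
      interval_cases i
      · simpa using hHwH eu heu
      · simpa using hHwH ev hev
    · intro i hi
      interval_cases i
      · simpa using hdeu
      · simpa using hdev
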